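/- arXiv:2408.10610 — 3 statements merged into one kernel-verified Lean document; each statement's English description precedes it below -/
import Mathlib

section
/- Let S be the unilateral shift operator on ℓ²(ℕ, ℂ), defined by (S a)(0) = 0 and (S a)(n) = a(n−1) for n ≥ 1. For every complex polynomial p, the operator norm of p(S) equals the sup norm of p on the unit circle: ‖p(S)‖ = sup_{z ∈ ℂ, |z| = 1} |p(z)|. -/
open Metric
open Polynomial
open scoped ENNReal NNReal ComplexConjugate

noncomputable section ShiftAux

namespace ShiftAux

theorem h2 : (0:ℝ) < (2 : ℝ≥0∞).toReal := by norm_num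

theorem memℓp_comp_equiv {α β : Type*} (e : β ≃ α) {f : ∀ _ : α, ℂ} (hf : Memℓp f 2) :
    Memℓp (fun b => f (e b)) 2 := by
  rw [memℓp_gen_iff h2] at hf ⊢
  exact (e.summable_iff (f := fun a => ‖f a‖ ^ (2 : ℝ≥0∞).toReal)).2 hf

def lpCongr {α β : Type*} (e : α ≃ β) : lp (fun _ : α => ℂ) 2 ≃ₗᵢ[ℂ] lp (fun _ : β => ℂ) 2 where
  toFun f := ⟨fun b => f (e.symm b), memℓp_comp_equiv e.symm (lp.memℓp f)⟩
  invFun g := ⟨fun a => g (e a), memℓp_comp_equiv e (lp.memℓp g)⟩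
  left_inv f := by ext a; simp
  right_inv g := by ext b; simp
  map_add' f g := by ext b; simp [lp.coeFn_add]; rfl
  map_smul' c f := by ext b; simp [lp.coeFn_smul]
  norm_map' f := by
    rw [lp.norm_eq_tsum_rpow h2, lp.norm_eq_tsum_rpow h2]
    congr 1
    exact e.symm.tsum_eq (fun a => ‖f a‖ ^ (2 : ℝ≥0∞).toReal)

@[simp] theorem lpCongr_apply {α β : Type*} (e : α ≃ β) (f : lp (fun _ : α => ℂ) 2) (b : β) :
    (lpCongr e f : ∀ _ : β, ℂ) b = f (e.symm b) := rfl

/-- The bilateral shift. -/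
def U : lp (fun _ : ℤ => ℂ) 2 →L[ℂ] lp (fun _ : ℤ => ℂ) 2 :=
  (lpCongr (Equiv.addRight (1 : ℤ))).toContinuousLinearEquiv.toContinuousLinearMap

def V : lp (fun _ : ℤ => ℂ) 2 →L[ℂ] lp (fun _ : ℤ => ℂ) 2 :=
  (lpCongr (Equiv.addRight (1 : ℤ))).symm.toContinuousLinearEquiv.toContinuousLinearMap

@[simp] theorem U_apply (f : lp (fun _ : ℤ => ℂ) 2) (n : ℤ) :
    (U f : ∀ _ : ℤ, ℂ) n = f (n - 1) := rfl

@[simp] theorem V_apply (f : lp (fun _ : ℤ => ℂ) 2) (n : ℤ) :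
    (V f : ∀ _ : ℤ, ℂ) n = f (n + 1) := rfl

theorem U_mul_V : U * V = 1 := by
  ext f n
  simp [U_apply, V_apply]

theorem V_mul_U : V * U = 1 := by
  ext f n
  simp [U_apply, V_apply]

theorem star_U : star U = V := by
  rw [ContinuousLinearMap.star_eq_adjoint]
  symm
  rw [ContinuousLinearMap.eq_adjoint_iff]
  intro x y
  rw [lp.inner_eq_tsum, lp.inner_eq_tsum]
  have key := (Equiv.addRight (1 : ℤ)).tsum_eq
    (fun n => (inner ℂ (x n) ((U y : ∀ _ : ℤ, ℂ) n) : ℂ))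
  refine Eq.trans ?_ key
  refine tsum_congr fun n => ?_
  simp

theorem U_mem_unitary : U ∈ unitary (lp (fun _ : ℤ => ℂ) 2 →L[ℂ] lp (fun _ : ℤ => ℂ) 2) :=
  ⟨by rw [star_U]; exact V_mul_U, by rw [star_U]; exact U_mul_V⟩
theorem isStarNormal_aeval_of_commute {A : Type*} [Ring A] [StarRing A] [Algebra ℂ A]
    [StarModule ℂ A] (a : A) (h : Commute a (star a)) (p : ℂ[X]) :
    IsStarNormal (aeval a p) := by
  constructor
  have hstar : star (aeval a p) = ∑ i ∈ Finset.range (p.natDegree + 1),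
      (starRingEnd ℂ) (p.coeff i) • (star a) ^ i := by
    rw [aeval_eq_sum_range, star_sum]
    refine Finset.sum_congr rfl fun i _ => ?_
    rw [star_smul, star_pow]
    rfl
  rw [hstar, aeval_eq_sum_range]
  refine Commute.sum_left _ _ _ fun i _ => ?_
  refine Commute.sum_right _ _ _ fun j _ => ?_
  exact ((h.symm.pow_pow i j).smul_left _).smul_right _

/-- Extension by zero of a one-sided sequence. -/
def Jfun (f : ∀ _ : ℕ, ℂ) : ∀ _ : ℤ, ℂ := fun m => if 0 ≤ m then f m.toNat else 0

theorem Jfun_coe (f : ∀ _ : ℕ, ℂ) (n : ℕ) : Jfun f n = f n := by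
  simp [Jfun]

theorem Jfun_support (f : ∀ _ : ℕ, ℂ) {g : ℂ → ℝ} (hg : g 0 = 0) :
    ∀ m : ℤ, m ∉ Set.range ((↑) : ℕ → ℤ) → g (Jfun f m) = 0 := by
  intro m hm
  have hm' : ¬ (0 ≤ m) := by
    intro h
    exact hm ⟨m.toNat, by omega⟩
  simp [Jfun, hm', hg]

theorem memℓp_Jfun {f : ∀ _ : ℕ, ℂ} (hf : Memℓp f 2) : Memℓp (Jfun f) 2 := by
  rw [memℓp_gen_iff h2] at hf ⊢
  have hinj : Function.Injective ((↑) : ℕ → ℤ) := fun a b hab => by omega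
  refine (hinj.summable_iff ?_).1 ?_
  · intro m hm
    exact Jfun_support f (g := fun c => ‖c‖ ^ (2 : ℝ≥0∞).toReal) (by simp [Real.zero_rpow (ne_of_gt h2)]) m hm
  · refine hf.congr fun n => ?_
    show ‖f n‖ ^ (2 : ℝ≥0∞).toReal = ‖Jfun f ((n : ℕ) : ℤ)‖ ^ (2 : ℝ≥0∞).toReal
    rw [Jfun_coe]

theorem natCast_injective : Function.Injective ((↑) : ℕ → ℤ) := fun a b hab => by omega

theorem tsum_Jfun (f : ∀ _ : ℕ, ℂ) :
    ∑' m : ℤ, ‖Jfun f m‖ ^ (2 : ℝ≥0∞).toReal = ∑' n : ℕ, ‖f n‖ ^ (2 : ℝ≥0∞).toReal := by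
  refine Eq.symm ?_
  have := natCast_injective.tsum_eq (f := fun m : ℤ => ‖Jfun f m‖ ^ (2 : ℝ≥0∞).toReal) ?_
  · refine Eq.trans ?_ this
    exact tsum_congr fun n => by rw [Jfun_coe]
  · intro m hm
    rw [Function.mem_support] at hm
    by_contra hmr
    exact hm (Jfun_support f (g := fun c => ‖c‖ ^ (2 : ℝ≥0∞).toReal) (by simp [Real.zero_rpow (ne_of_gt h2)]) m hmr)

/-- Isometric embedding of `ℓ²(ℕ)` into `ℓ²(ℤ)`. -/
def J : lp (fun _ : ℕ => ℂ) 2 →ₗᵢ[ℂ] lp (fun _ : ℤ => ℂ) 2 where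
  toFun f := ⟨Jfun f, memℓp_Jfun (lp.memℓp f)⟩
  map_add' f g := by
    ext m
    show Jfun (↑(f + g)) m = Jfun f m + Jfun g m
    simp only [Jfun, lp.coeFn_add, Pi.add_apply]
    split_ifs <;> simp
  map_smul' c f := by
    ext m
    show Jfun (↑(c • f)) m = c • Jfun f m
    simp only [Jfun, lp.coeFn_smul, Pi.smul_apply]
    split_ifs
    · rfl
    · simp
  norm_map' f := by
    rw [lp.norm_eq_tsum_rpow h2, lp.norm_eq_tsum_rpow h2]
    congr 1
    exact tsum_Jfun f

@[simp] theorem J_apply (f : lp (fun _ : ℕ => ℂ) 2) (m : ℤ) :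
    (J f : ∀ _ : ℤ, ℂ) m = if 0 ≤ m then f m.toNat else 0 := rfl
instance : Nontrivial (lp (fun _ : ℤ => ℂ) 2) := by
  refine nontrivial_of_ne (lp.single 2 (0 : ℤ) (1 : ℂ)) 0 fun h => ?_
  have := congrArg (fun f : lp (fun _ : ℤ => ℂ) 2 => (f : ∀ _ : ℤ, ℂ) 0) h
  simp only [lp.single_apply_self] at this
  exact one_ne_zero (this.trans rfl)

theorem commute_U_star : Commute U (star U) := by
  rw [star_U]
  show U * V = V * U
  rw [U_mul_V, V_mul_U]

theorem norm_aeval_U_le (p : ℂ[X]) (R : ℝ) (hR : 0 ≤ R)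
    (hRb : ∀ z ∈ Metric.sphere (0 : ℂ) 1, ‖p.eval z‖ ≤ R) : ‖aeval U p‖ ≤ R := by
  haveI : IsStarNormal (aeval U p) := isStarNormal_aeval_of_commute U commute_U_star p
  have h1 : spectralRadius ℂ (aeval U p) = ‖aeval U p‖₊ :=
    IsStarNormal.spectralRadius_eq_nnnorm _
  have hmap : spectrum ℂ (aeval U p) = (fun k => eval k p) '' spectrum ℂ U :=
    spectrum.map_polynomial_aeval_of_nonempty U p (spectrum.nonempty U)
  have key : spectralRadius ℂ (aeval U p) ≤ (R.toNNReal : ℝ≥0∞) := by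
    rw [spectralRadius]
    refine iSup₂_le fun μ hμ => ?_
    rw [hmap] at hμ
    obtain ⟨z, hz, rfl⟩ := hμ
    have hzs : z ∈ Metric.sphere (0 : ℂ) 1 :=
      spectrum.subset_circle_of_unitary U_mem_unitary hz
    have hle : ‖eval z p‖ ≤ R := hRb z hzs
    exact ENNReal.coe_le_coe.2 ((Real.le_toNNReal_iff_coe_le hR).2 hle)
  rw [h1] at key
  have : ‖aeval U p‖₊ ≤ R.toNNReal := ENNReal.coe_le_coe.1 key
  calc ‖aeval U p‖ = (‖aeval U p‖₊ : ℝ) := rfl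
    _ ≤ (R.toNNReal : ℝ) := this
    _ = R := Real.coe_toNNReal R hR


theorem rpow_t_eq (x : ℝ) : x ^ (2 : ℝ≥0∞).toReal = x ^ (2 : ℕ) := by
  rw [show (2 : ℝ≥0∞).toReal = ((2 : ℕ) : ℝ) by norm_num, Real.rpow_natCast]

theorem norm_sq_eq (f : lp (fun _ : ℕ => ℂ) 2) :
    ‖f‖ ^ (2 : ℕ) = ∑' n : ℕ, ‖(f : ∀ _ : ℕ, ℂ) n‖ ^ (2 : ℕ) := by
  have := lp.norm_rpow_eq_tsum h2 f
  simpa only [rpow_t_eq] using this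

theorem summable_norm_sq (f : lp (fun _ : ℕ => ℂ) 2) :
    Summable fun n : ℕ => ‖(f : ∀ _ : ℕ, ℂ) n‖ ^ (2 : ℕ) := by
  have := (lp.memℓp f).summable h2
  simpa only [rpow_t_eq] using this

/-- truncated geometric test vector -/
def test (z : ℂ) (N : ℕ) : lp (fun _ : ℕ => ℂ) 2 :=
  ⟨fun n => if n < N then (starRingEnd ℂ z) ^ n else 0, by
    apply memℓp_gen
    apply summable_of_ne_finset_zero (s := Finset.range N)
    intro n hn
    simp only [Finset.mem_range] at hn
    simp [if_neg hn, Real.zero_rpow (ne_of_gt h2)]⟩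

@[simp] theorem test_apply (z : ℂ) (N n : ℕ) :
    (test z N : ∀ _ : ℕ, ℂ) n = if n < N then (starRingEnd ℂ z) ^ n else 0 := rfl

theorem test_norm_sq (z : ℂ) (hz : ‖z‖ = 1) (N : ℕ) : ‖test z N‖ ^ (2 : ℕ) = (N : ℝ) := by
  rw [norm_sq_eq]
  rw [tsum_eq_sum (s := Finset.range N) (fun n hn => by
    simp only [Finset.mem_range] at hn
    simp [test_apply, if_neg hn])]
  rw [Finset.sum_congr rfl (fun n hn => by
    simp only [Finset.mem_range] at hn
    rw [test_apply, if_pos hn, norm_pow, RCLike.norm_conj, hz, one_pow, one_pow])]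
  simp

section S

variable (S : lp (fun _ : ℕ => ℂ) 2 →L[ℂ] lp (fun _ : ℕ => ℂ) 2)
  (hS : ∀ (a : lp (fun _ : ℕ => ℂ) 2) (n : ℕ),
    (S a : ∀ _ : ℕ, ℂ) n = if n = 0 then 0 else a (n - 1))

include hS

theorem U_J_comm (x : lp (fun _ : ℕ => ℂ) 2) : U (J x) = J (S x) := by
  ext m
  rw [U_apply, J_apply, J_apply]
  rcases le_or_gt 1 m with h | h
  · rw [if_pos (by omega), if_pos (by omega), hS]
    rw [if_neg (by omega)]
    have hnat : (m - 1).toNat = m.toNat - 1 := by omega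
    rw [hnat]
  · rw [if_neg (by omega)]
    rcases le_or_gt 0 m with h0 | h0
    · have hm0 : m = 0 := by omega
      subst hm0
      rw [if_pos le_rfl, hS]
      simp
    · rw [if_neg (by omega)]

theorem U_pow_J (k : ℕ) (x : lp (fun _ : ℕ => ℂ) 2) : (U ^ k) (J x) = J ((S ^ k) x) := by
  induction k generalizing x with
  | zero => simp
  | succ k ih =>
      rw [pow_succ, pow_succ, ContinuousLinearMap.mul_apply, ContinuousLinearMap.mul_apply,
        U_J_comm S hS, ih]

theorem aeval_U_J (p : ℂ[X]) (x : lp (fun _ : ℕ => ℂ) 2) :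
    (aeval U p) (J x) = J ((aeval S p) x) := by
  rw [aeval_eq_sum_range, aeval_eq_sum_range]
  rw [ContinuousLinearMap.sum_apply, ContinuousLinearMap.sum_apply, map_sum]
  refine Finset.sum_congr rfl fun k _ => ?_
  rw [ContinuousLinearMap.smul_apply, ContinuousLinearMap.smul_apply, map_smul, U_pow_J S hS]

theorem norm_aeval_S_le_U (p : ℂ[X]) : ‖aeval S p‖ ≤ ‖aeval U p‖ := by
  refine ContinuousLinearMap.opNorm_le_bound _ (norm_nonneg _) fun x => ?_
  calc ‖(aeval S p) x‖ = ‖J ((aeval S p) x)‖ := (J.norm_map _).symm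
    _ = ‖(aeval U p) (J x)‖ := by rw [aeval_U_J S hS]
    _ ≤ ‖aeval U p‖ * ‖J x‖ := (aeval U p).le_opNorm _
    _ = ‖aeval U p‖ * ‖x‖ := by rw [J.norm_map]


theorem S_pow_apply (k : ℕ) (a : lp (fun _ : ℕ => ℂ) 2) (n : ℕ) :
    ((S ^ k) a : ∀ _ : ℕ, ℂ) n = if n < k then 0 else a (n - k) := by
  induction k generalizing a n with
  | zero => simp
  | succ k ih =>
      rw [pow_succ, ContinuousLinearMap.mul_apply, ih, hS]
      split_ifs <;> first | rfl | omega | (congr 1; omega)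

theorem aeval_test_apply (p : ℂ[X]) (z : ℂ) (hz : ‖z‖ = 1) (N n : ℕ)
    (hdn : p.natDegree ≤ n) (hnN : n < N) :
    ((aeval S p) (test z N) : ∀ _ : ℕ, ℂ) n = (starRingEnd ℂ z) ^ n * p.eval z := by
  have hz1 : z * starRingEnd ℂ z = 1 := by
    rw [Complex.mul_conj]
    norm_cast
    rw [Complex.normSq_eq_norm_sq, hz, one_pow]
  rw [aeval_eq_sum_range, ContinuousLinearMap.sum_apply, lp.coeFn_sum, Finset.sum_apply]
  have hterm : ∀ i ∈ Finset.range (p.natDegree + 1),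
      ((p.coeff i • (S ^ i)) (test z N) : ∀ _ : ℕ, ℂ) n
        = p.coeff i * ((starRingEnd ℂ z) ^ n * z ^ i) := by
    intro i hi
    simp only [Finset.mem_range] at hi
    have hin : i ≤ n := by omega
    rw [ContinuousLinearMap.smul_apply, lp.coeFn_smul, Pi.smul_apply,
      S_pow_apply S hS, if_neg (by omega), test_apply, if_pos (by omega)]
    rw [smul_eq_mul]
    congr 1
    calc (starRingEnd ℂ z) ^ (n - i)
        = (starRingEnd ℂ z) ^ (n - i) * (z * starRingEnd ℂ z) ^ i := by
          rw [hz1, one_pow, mul_one]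
      _ = ((starRingEnd ℂ z) ^ (n - i) * (starRingEnd ℂ z) ^ i) * z ^ i := by ring
      _ = (starRingEnd ℂ z) ^ n * z ^ i := by
          rw [← pow_add]
          congr 2
          omega
  rw [Finset.sum_congr rfl hterm, eval_eq_sum_range, Finset.mul_sum]
  exact Finset.sum_congr rfl fun i _ => by ring

theorem eval_le_norm_aeval (p : ℂ[X]) (z : ℂ) (hz : ‖z‖ = 1) :
    ‖p.eval z‖ ≤ ‖aeval S p‖ := by
  set T := aeval S p with hT
  set C := ‖T‖ with hC
  set d := p.natDegree with hd
  have hC0 : 0 ≤ C := norm_nonneg _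
  have key : ∀ N : ℕ, d ≤ N → ((N : ℝ) - d) * ‖p.eval z‖ ^ (2 : ℕ) ≤ C ^ (2 : ℕ) * N := by
    intro N hN
    have hx : ‖test z N‖ ^ (2 : ℕ) = (N : ℝ) := test_norm_sq z hz N
    have h1 : ‖T (test z N)‖ ^ (2 : ℕ) ≤ C ^ (2 : ℕ) * N := by
      calc ‖T (test z N)‖ ^ (2 : ℕ) ≤ (C * ‖test z N‖) ^ (2 : ℕ) :=
            pow_le_pow_left₀ (norm_nonneg _) (T.le_opNorm _) 2
        _ = C ^ (2 : ℕ) * ‖test z N‖ ^ (2 : ℕ) := mul_pow _ _ _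
        _ = C ^ (2 : ℕ) * N := by rw [hx]
    refine le_trans ?_ h1
    rw [norm_sq_eq]
    calc ((N : ℝ) - d) * ‖p.eval z‖ ^ (2 : ℕ)
        = ∑ _n ∈ Finset.Ico d N, ‖p.eval z‖ ^ (2 : ℕ) := by
          rw [Finset.sum_const, Nat.card_Ico, nsmul_eq_mul, Nat.cast_sub hN]
      _ = ∑ n ∈ Finset.Ico d N, ‖(T (test z N) : ∀ _ : ℕ, ℂ) n‖ ^ (2 : ℕ) :=
          Finset.sum_congr rfl fun n hn => by
            rw [Finset.mem_Ico] at hn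
            rw [aeval_test_apply S hS p z hz N n hn.1 hn.2, norm_mul, norm_pow,
              RCLike.norm_conj, hz, one_pow, one_mul]
      _ ≤ ∑' n : ℕ, ‖(T (test z N) : ∀ _ : ℕ, ℂ) n‖ ^ (2 : ℕ) :=
          Summable.sum_le_tsum _ (fun n _ => by positivity) (summable_norm_sq _)
  have hdiv : ∀ N : ℕ, d + 1 ≤ N → ‖p.eval z‖ ^ (2 : ℕ) ≤ C ^ (2 : ℕ) +
      ((d : ℝ) * ‖p.eval z‖ ^ (2 : ℕ)) / N := by
    intro N hN
    have hk := key N (by omega)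
    have hNpos : (0 : ℝ) < N := by
      have : (1 : ℕ) ≤ N := by omega
      exact_mod_cast Nat.lt_of_lt_of_le Nat.zero_lt_one this
    have h3 : ‖p.eval z‖ ^ (2 : ℕ) * N ≤
        (C ^ (2 : ℕ) + ((d : ℝ) * ‖p.eval z‖ ^ (2 : ℕ)) / N) * N := by
      rw [add_mul, div_mul_cancel₀ _ (ne_of_gt hNpos)]
      nlinarith [hk]
    exact le_of_mul_le_mul_right h3 hNpos
  have hlim : Filter.Tendsto (fun N : ℕ => C ^ (2 : ℕ) + ((d : ℝ) * ‖p.eval z‖ ^ (2 : ℕ)) / N)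
      Filter.atTop (nhds (C ^ (2 : ℕ) + 0)) :=
    Filter.Tendsto.add tendsto_const_nhds (tendsto_const_div_atTop_nhds_zero_nat _)
  rw [add_zero] at hlim
  have h4 : ‖p.eval z‖ ^ (2 : ℕ) ≤ C ^ (2 : ℕ) :=
    ge_of_tendsto hlim (Filter.eventually_atTop.2 ⟨d + 1, fun N hN => hdiv N hN⟩)
  exact (pow_le_pow_iff_left₀ (norm_nonneg _) hC0 (by norm_num)).1 h4

end S

end ShiftAux

end ShiftAux

/-- For the unilateral shift `S` on `ℓ²(ℕ, ℂ)` (`(S a)(0) = 0`,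
`(S a)(n) = a(n−1)` for `n ≥ 1`) and every complex polynomial `p`, the operator norm of
`p(S)` equals the sup norm of `p` on the unit circle. -/
theorem unilateral_shift_polynomial_norm_eq_supnorm_on_circle
    (S : lp (fun _ : ℕ => ℂ) 2 →L[ℂ] lp (fun _ : ℕ => ℂ) 2)
    (hS : ∀ (a : lp (fun _ : ℕ => ℂ) 2) (n : ℕ),
      (S a : ∀ _ : ℕ, ℂ) n = if n = 0 then 0 else a (n - 1))
    (p : Polynomial ℂ) :
    ‖Polynomial.aeval S p‖ = ⨆ z : sphere (0 : ℂ) 1, ‖p.eval (z : ℂ)‖ := by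
  haveI : Nonempty (sphere (0 : ℂ) 1) := ⟨⟨1, by simp⟩⟩
  have hbdd : BddAbove (Set.range fun z : sphere (0 : ℂ) 1 => ‖p.eval (z : ℂ)‖) := by
    have h1 : Set.range (fun z : sphere (0 : ℂ) 1 => ‖p.eval (z : ℂ)‖)
        = (fun z : ℂ => ‖p.eval z‖) '' (sphere (0 : ℂ) 1) := (Set.image_eq_range (fun z : ℂ => ‖p.eval z‖) (sphere (0 : ℂ) 1)).symm
    rw [h1]
    exact (isCompact_sphere (0 : ℂ) 1).bddAbove_image (p.continuous.norm.continuousOn)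
  refine le_antisymm ?_ (ciSup_le fun z => ?_)
  · have hRb : ∀ z ∈ sphere (0 : ℂ) 1,
        ‖p.eval z‖ ≤ ⨆ z : sphere (0 : ℂ) 1, ‖p.eval (z : ℂ)‖ :=
      fun z hz => le_ciSup hbdd (⟨z, hz⟩ : sphere (0 : ℂ) 1)
    have hR0 : 0 ≤ ⨆ z : sphere (0 : ℂ) 1, ‖p.eval (z : ℂ)‖ :=
      le_trans (norm_nonneg _) (hRb 1 (by simp))
    exact le_trans (ShiftAux.norm_aeval_S_le_U S hS p)
      (ShiftAux.norm_aeval_U_le p _ hR0 hRb)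
  · exact ShiftAux.eval_le_norm_aeval S hS p z (mem_sphere_zero_iff_norm.1 z.2)
end

section
/- Let f be a bounded holomorphic function on the open unit disk 𝔻 with Taylor coefficients (x_n)_{n≥0}, and let a ∈ ℓ²(ℕ, ℂ). Then the Cauchy-product sequence b defined by b(n) = ∑_{k=0}^n x_k · a(n−k) is in ℓ²(ℕ, ℂ) and ‖b‖_{ℓ²} ≤ (sup_{z∈𝔻} |f(z)|) · ‖a‖_{ℓ²}. Consequently f(L) is a well-defined bounded linear operator (of norm at most sup_{z∈𝔻}|f(z)|) on the space of past innovations, for every H∞ transfer function f. -/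
open Metric MeasureTheory AddCircle ContinuousMap
open scoped ENNReal

noncomputable section
local instance : Fact ((0:ℝ) < 1) := ⟨one_pos⟩

/-- fourierCoeff is invariant under a.e.-equal (toLp). -/
lemma fourierCoeff_toLp' (g : C(AddCircle (1:ℝ), ℂ)) (m : ℤ) :
    fourierCoeff (⇑(ContinuousMap.toLp (E := ℂ) 2 haarAddCircle ℂ g)) m = fourierCoeff (⇑g) m := by
  unfold fourierCoeff
  apply integral_congr_ae
  filter_upwards [ContinuousMap.coeFn_toLp (p := 2) haarAddCircle (𝕜 := ℂ) g] with t ht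
  rw [ht]

lemma fourierCoeff_hasSum (c : ℤ → ℂ) (F : C(AddCircle (1:ℝ), ℂ))
    (hF : HasSum (fun n => c n • fourier n) F) (m : ℤ) :
    fourierCoeff (⇑F) m = c m := by
  classical
  set Φ : C(AddCircle (1:ℝ), ℂ) →L[ℂ] ℂ :=
    (innerSL ℂ (fourierLp (T := 1) 2 m)).comp (ContinuousMap.toLp (E := ℂ) 2 haarAddCircle ℂ)
  have hΦ : ∀ g : C(AddCircle (1:ℝ), ℂ), Φ g = fourierCoeff (⇑g) m := by
    intro g
    have : Φ g = (fourierBasis (T := 1)).repr (ContinuousMap.toLp (E := ℂ) 2 haarAddCircle ℂ g) m := by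
      rw [HilbertBasis.repr_apply_apply, coe_fourierBasis]
      rfl
    rw [this, fourierBasis_repr, fourierCoeff_toLp']
  have h1 : HasSum (fun n => Φ (c n • fourier n)) (Φ F) := Φ.hasSum hF
  have h2 : (fun n => Φ (c n • fourier n)) = fun n => if n = m then c n else 0 := by
    funext n
    rw [_root_.map_smul]
    have : Φ (fourier n) = if m = n then 1 else 0 := by
      have := orthonormal_fourier (T := 1)
      rw [orthonormal_iff_ite] at this
      exact this m n
    rw [this]
    simp only [smul_eq_mul, mul_ite, mul_one, mul_zero]
    congr 1
    · simp [eq_comm]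
  rw [h2] at h1
  have h3 : HasSum (fun n : ℤ => if n = m then c n else 0) (c m) := by
    convert hasSum_ite_eq m (c m) using 2 with n
    split_ifs with h
    · rw [h]
    · rfl
  rw [← hΦ]
  exact h1.unique h3
lemma parseval_cont (F : C(AddCircle (1:ℝ), ℂ)) :
    Summable (fun m : ℤ => ‖fourierCoeff (⇑F) m‖ ^ 2) ∧
    ∑' m : ℤ, ‖fourierCoeff (⇑F) m‖ ^ 2 = ∫ t, ‖F t‖ ^ 2 ∂haarAddCircle := by
  set flp := ContinuousMap.toLp (E := ℂ) 2 haarAddCircle ℂ F with hflp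
  have hcoeff : ∀ m : ℤ, fourierCoeff (⇑flp) m = fourierCoeff (⇑F) m := by
    intro m
    unfold fourierCoeff
    apply integral_congr_ae
    filter_upwards [ContinuousMap.coeFn_toLp (p := 2) haarAddCircle (𝕜 := ℂ) F] with t ht
    rw [ht]
  have hsum : Summable (fun m : ℤ => ‖fourierCoeff (⇑F) m‖ ^ 2) := by
    have h1 : Memℓp (fun m => (fourierBasis (T := 1)).repr flp m) 2 :=
      lp.memℓp ((fourierBasis (T := 1)).repr flp)
    have h2 := (memℓp_gen_iff (p := 2) (by norm_num)).mp h1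
    have h3 : (fun m : ℤ => ‖(fourierBasis (T := 1)).repr flp m‖ ^ (2:ℝ≥0∞).toReal)
        = fun m : ℤ => ‖fourierCoeff (⇑F) m‖ ^ 2 := by
      funext m
      rw [fourierBasis_repr, hcoeff m]
      norm_num
    rwa [h3] at h2
  refine ⟨hsum, ?_⟩
  have := tsum_sq_fourierCoeff flp
  simp_rw [hcoeff] at this
  rw [this]
  apply integral_congr_ae
  filter_upwards [ContinuousMap.coeFn_toLp (p := 2) haarAddCircle (𝕜 := ℂ) F] with t ht
  rw [ht]
lemma norm_fourier_apply_eq_one (n : ℤ) (t : AddCircle (1:ℝ)) : ‖(fourier n t : ℂ)‖ = 1 := by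
  rw [fourier_apply, Circle.norm_coe]

lemma norm_fourier_le_one (n : ℤ) : ‖(fourier n : C(AddCircle (1:ℝ), ℂ))‖ ≤ 1 :=
  ContinuousMap.norm_le _ zero_le_one |>.mpr fun t => le_of_eq (norm_fourier_apply_eq_one n t)

lemma fourier_nat_mul (k m : ℕ) :
    (fourier (k:ℤ) : C(AddCircle (1:ℝ), ℂ)) * fourier (m:ℤ) = fourier ((k+m : ℕ) : ℤ) := by
  ext t
  push_cast
  rw [Pi.mul_apply, ← fourier_add]

lemma fourier_nat_pow (n : ℕ) (t : AddCircle (1:ℝ)) :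
    (fourier (n:ℤ) t : ℂ) = (fourier (1:ℤ) t) ^ n := by
  induction n with
  | zero => simp [fourier_zero]
  | succ n ih =>
      have : ((n+1 : ℕ) : ℤ) = (n : ℤ) + 1 := by push_cast; ring
      rw [this, fourier_add, ih, pow_succ, mul_comm]
lemma hasSum_eval {u : ℕ → C(AddCircle (1:ℝ), ℂ)} {F : C(AddCircle (1:ℝ), ℂ)} (h : HasSum u F)
    (t : AddCircle (1:ℝ)) : HasSum (fun n => u n t) (F t) :=
  (ContinuousMap.evalCLM ℂ t).hasSum h

set_option maxHeartbeats 400000 in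
lemma step_r (f : ℂ → ℂ) (x : ℕ → ℂ) (M : ℝ)
    (hfM : ∀ z ∈ ball (0:ℂ) 1, ‖f z‖ ≤ M)
    (hx : ∀ z ∈ ball (0:ℂ) 1, HasSum (fun n : ℕ => x n * z ^ n) (f z))
    (a : ℕ → ℂ) (A : ℝ) (haA : ∀ n, ‖a n‖ ≤ A)
    (ha1 : Summable (fun n => ‖a n‖ ^ 2))
    (r : ℝ) (hr0 : 0 < r) (hr1 : r < 1) (N : ℕ) :
    ∑ n ∈ Finset.range N, ‖((r:ℂ))^n * ∑ k ∈ Finset.range (n + 1), x k * a (n - k)‖ ^ 2 ≤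
      M ^ 2 * ∑' n : ℕ, ‖a n‖ ^ 2 := by
  classical
  -- coefficient bounds
  set s : ℝ := (r + 1) / 2 with hs
  have hrs : r < s := by rw [hs]; linarith
  have hs0 : 0 < s := lt_trans hr0 hrs
  have hs1 : s < 1 := by rw [hs]; linarith
  have hsball : (s : ℂ) ∈ ball (0:ℂ) 1 := by
    simp [abs_of_pos hs0, hs1]
  have hxs : Summable (fun n : ℕ => ‖x n * (s:ℂ) ^ n‖) :=
    summable_norm_iff.mpr (hx _ hsball).summable
  set B : ℝ := ∑' n : ℕ, ‖x n * (s:ℂ) ^ n‖ with hB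
  have hxB : ∀ n, ‖x n * (s:ℂ) ^ n‖ ≤ B := fun n => Summable.le_tsum hxs n (fun _ _ => norm_nonneg _)
  set c : ℕ → ℂ := fun n => x n * (r:ℂ) ^ n with hc
  set d : ℕ → ℂ := fun n => a n * (r:ℂ) ^ n with hd
  have hcn : ∀ n, ‖c n‖ ≤ B * (r / s) ^ n := by
    intro n
    have h1 : ‖c n‖ = ‖x n * (s:ℂ)^n‖ * (r/s)^n := by
      simp only [hc, norm_mul, norm_pow, Complex.norm_real, Real.norm_eq_abs,
        abs_of_pos hr0, abs_of_pos hs0, div_pow]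
      field_simp
    rw [h1]
    exact mul_le_mul_of_nonneg_right (hxB n) (by positivity)
  have hcsum : Summable (fun n => ‖c n‖) := by
    apply Summable.of_nonneg_of_le (fun n => norm_nonneg _) hcn
    apply Summable.mul_left
    exact summable_geometric_of_lt_one (by positivity) (by rw [div_lt_one hs0]; exact hrs)
  have hdn : ∀ n, ‖d n‖ ≤ A * r ^ n := by
    intro n
    simp only [hd, norm_mul, norm_pow, Complex.norm_real, Real.norm_eq_abs, abs_of_pos hr0]
    exact mul_le_mul_of_nonneg_right (haA n) (by positivity)
  have hdsum : Summable (fun n => ‖d n‖) := by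
    apply Summable.of_nonneg_of_le (fun n => norm_nonneg _) hdn
    exact (summable_geometric_of_lt_one hr0.le hr1).mul_left A
  -- the continuous functions
  set u : ℕ → C(AddCircle (1:ℝ), ℂ) := fun n => c n • fourier (n:ℤ) with hu
  set v : ℕ → C(AddCircle (1:ℝ), ℂ) := fun n => d n • fourier (n:ℤ) with hv
  have hun : ∀ n, ‖u n‖ ≤ ‖c n‖ := by
    intro n
    rw [hu]
    calc ‖c n • (fourier (n:ℤ) : C(AddCircle (1:ℝ), ℂ))‖ = ‖c n‖ * ‖(fourier (n:ℤ) : C(AddCircle (1:ℝ), ℂ))‖ := norm_smul _ _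
    _ ≤ ‖c n‖ * 1 := mul_le_mul_of_nonneg_left (norm_fourier_le_one _) (norm_nonneg _)
    _ = ‖c n‖ := mul_one _
  have hvn : ∀ n, ‖v n‖ ≤ ‖d n‖ := by
    intro n
    rw [hv]
    calc ‖d n • (fourier (n:ℤ) : C(AddCircle (1:ℝ), ℂ))‖ = ‖d n‖ * ‖(fourier (n:ℤ) : C(AddCircle (1:ℝ), ℂ))‖ := norm_smul _ _
    _ ≤ ‖d n‖ * 1 := mul_le_mul_of_nonneg_left (norm_fourier_le_one _) (norm_nonneg _)
    _ = ‖d n‖ := mul_one _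
  have husum : Summable (fun n => ‖u n‖) :=
    Summable.of_nonneg_of_le (fun n => norm_nonneg _) hun hcsum
  have hvsum : Summable (fun n => ‖v n‖) :=
    Summable.of_nonneg_of_le (fun n => norm_nonneg _) hvn hdsum
  have huS : Summable u := husum.of_norm
  have hvS : Summable v := hvsum.of_norm
  obtain ⟨F, hFsum⟩ : ∃ F : C(AddCircle (1:ℝ), ℂ), HasSum u F := ⟨_, huS.hasSum⟩
  obtain ⟨G, hGsum⟩ : ∃ G : C(AddCircle (1:ℝ), ℂ), HasSum v G := ⟨_, hvS.hasSum⟩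
  -- pointwise bound on F
  have hFbound : ∀ t, ‖F t‖ ≤ M := by
    intro t
    have hz : (r:ℂ) * fourier (1:ℤ) t ∈ ball (0:ℂ) 1 := by
      rw [mem_ball_zero_iff, norm_mul, norm_fourier_apply_eq_one, mul_one,
        Complex.norm_real, Real.norm_eq_abs, abs_of_pos hr0]
      exact hr1
    have h1 : HasSum (fun n : ℕ => u n t) (F t) := hasSum_eval hFsum t
    have h2 : (fun n : ℕ => u n t) = fun n : ℕ => x n * ((r:ℂ) * fourier (1:ℤ) t) ^ n := by
      funext n
      simp only [hu, hc, ContinuousMap.smul_apply, smul_eq_mul]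
      rw [fourier_nat_pow, mul_pow]
      ring
    rw [h2] at h1
    have := (hx _ hz).unique h1
    rw [← this]
    exact hfM _ hz
  -- pointwise description of G coefficients: Cauchy product
  set w : ℕ → ℂ := fun n => ∑ k ∈ Finset.range (n + 1), c k * d (n - k) with hw
  have hwsum : Summable (fun n => ‖∑ k ∈ Finset.range (n + 1), u k * v (n - k)‖) :=
    summable_norm_sum_mul_range_of_summable_norm husum hvsum
  have hcw : ∀ n, ∑ k ∈ Finset.range (n + 1), u k * v (n - k) = w n • fourier (n:ℤ) := by
    intro n
    rw [hw]
    rw [Finset.sum_smul]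
    apply Finset.sum_congr rfl
    intro k hk
    rw [Finset.mem_range] at hk
    have hkn : k + (n - k) = n := Nat.add_sub_cancel' (Nat.lt_succ_iff.mp hk)
    rw [hu, hv, smul_mul_smul_comm, fourier_nat_mul, hkn]
  have hFGsum : HasSum (fun n : ℕ => w n • (fourier (n:ℤ) : C(AddCircle (1:ℝ), ℂ))) (F * G) := by
    have h1 : Summable (fun n : ℕ => ∑ k ∈ Finset.range (n + 1), u k * v (n - k)) :=
      hwsum.of_norm
    have h2 := tsum_mul_tsum_eq_tsum_sum_range_of_summable_norm husum hvsum
    have h3 : HasSum (fun n : ℕ => ∑ k ∈ Finset.range (n + 1), u k * v (n - k)) (F * G) := by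
      rw [← hFsum.tsum_eq, ← hGsum.tsum_eq, h2]
      exact h1.hasSum
    simpa only [hcw] using h3
  -- extend coefficients to ℤ
  set e : ℤ → ℂ := fun m => if hm : 0 ≤ m then w m.toNat else 0 with he
  set eG : ℤ → ℂ := fun m => if hm : 0 ≤ m then d m.toNat else 0 with heG
  have hrange : ∀ m : ℤ, m ∉ Set.range ((↑·) : ℕ → ℤ) → ¬ (0 ≤ m) := by
    intro m hm h
    exact hm ⟨m.toNat, Int.toNat_of_nonneg h⟩
  have hZ : HasSum (fun m : ℤ => e m • (fourier m : C(AddCircle (1:ℝ), ℂ))) (F * G) := by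
    rw [← Function.Injective.hasSum_iff (g := ((↑·) : ℕ → ℤ)) (Nat.cast_injective : Function.Injective ((↑·) : ℕ → ℤ)) ?_]
    · have hco : ((fun m : ℤ => e m • (fourier m : C(AddCircle (1:ℝ), ℂ))) ∘ ((↑·) : ℕ → ℤ))
          = fun n : ℕ => w n • (fourier (n:ℤ) : C(AddCircle (1:ℝ), ℂ)) := by
        funext n
        simp [he, Function.comp, Int.natCast_nonneg, Int.toNat_natCast]
      rw [hco]
      exact hFGsum
    · intro m hm
      simp only [he, dif_neg (hrange m hm), zero_smul]
  have hZG : HasSum (fun m : ℤ => eG m • (fourier m : C(AddCircle (1:ℝ), ℂ))) G := by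
    rw [← Function.Injective.hasSum_iff (g := ((↑·) : ℕ → ℤ)) (Nat.cast_injective : Function.Injective ((↑·) : ℕ → ℤ)) ?_]
    · have hco : ((fun m : ℤ => eG m • (fourier m : C(AddCircle (1:ℝ), ℂ))) ∘ ((↑·) : ℕ → ℤ))
          = fun n : ℕ => d n • (fourier (n:ℤ) : C(AddCircle (1:ℝ), ℂ)) := by
        funext n
        simp [heG, Function.comp, Int.natCast_nonneg, Int.toNat_natCast]
      rw [hco]
      exact hGsum
    · intro m hm
      simp only [heG, dif_neg (hrange m hm), zero_smul]
  have hcoeFG : ∀ m, fourierCoeff (⇑(F * G)) m = e m := fun m => fourierCoeff_hasSum e _ hZ m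
  have hcoeG : ∀ m, fourierCoeff (⇑G) m = eG m := fun m => fourierCoeff_hasSum eG _ hZG m
  obtain ⟨hSFG, hPFG⟩ := parseval_cont (F * G)
  obtain ⟨hSG, hPG⟩ := parseval_cont G
  simp_rw [hcoeFG] at hSFG hPFG
  simp_rw [hcoeG] at hSG hPG
  -- integral comparison
  have hIG : Integrable (fun t => ‖G t‖ ^ 2) haarAddCircle :=
    ((G.continuous.norm).pow 2).integrable_of_hasCompactSupport
      (HasCompactSupport.of_compactSpace _)
  have hIFG : Integrable (fun t => ‖(F * G) t‖ ^ 2) haarAddCircle :=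
    (((F * G).continuous.norm).pow 2).integrable_of_hasCompactSupport
      (HasCompactSupport.of_compactSpace _)
  have hint : (∫ t, ‖(F * G) t‖ ^ 2 ∂haarAddCircle) ≤
      M ^ 2 * ∫ t, ‖G t‖ ^ 2 ∂haarAddCircle := by
    rw [← integral_const_mul]
    apply integral_mono hIFG (hIG.const_mul _)
    intro t
    have h1 : ‖(F * G) t‖ = ‖F t‖ * ‖G t‖ := by
      rw [ContinuousMap.mul_apply, norm_mul]
    have h2 : ‖F t‖ * ‖G t‖ ≤ M * ‖G t‖ :=
      mul_le_mul_of_nonneg_right (hFbound t) (norm_nonneg _)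
    calc ‖(F * G) t‖ ^ 2 = (‖F t‖ * ‖G t‖) ^ 2 := by rw [h1]
      _ ≤ (M * ‖G t‖) ^ 2 := by
          apply pow_le_pow_left₀ (by positivity) h2
      _ = M ^ 2 * ‖G t‖ ^ 2 := by ring
  -- the ℓ² sum of eG
  have hdsq : Summable (fun n : ℕ => ‖d n‖ ^ 2) := by
    apply Summable.of_nonneg_of_le (fun n => by positivity) (fun n => ?_) ha1
    apply pow_le_pow_left₀ (norm_nonneg _)
    calc ‖d n‖ = ‖a n‖ * r ^ n := by
          simp [hd, norm_mul, norm_pow, Complex.norm_real, Real.norm_eq_abs, abs_of_pos hr0]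
      _ ≤ ‖a n‖ * 1 := by
          apply mul_le_mul_of_nonneg_left _ (norm_nonneg _)
          exact pow_le_one₀ hr0.le hr1.le
      _ = ‖a n‖ := mul_one _
  have hsumG : ∑' m : ℤ, ‖eG m‖ ^ 2 = ∑' n : ℕ, ‖d n‖ ^ 2 := by
    apply HasSum.tsum_eq
    rw [← Function.Injective.hasSum_iff (g := ((↑·) : ℕ → ℤ)) (Nat.cast_injective : Function.Injective ((↑·) : ℕ → ℤ)) ?_]
    · have hco : ((fun m : ℤ => ‖eG m‖ ^ 2) ∘ ((↑·) : ℕ → ℤ)) = fun n : ℕ => ‖d n‖ ^ 2 := by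
        funext n
        simp [heG, Function.comp, Int.natCast_nonneg, Int.toNat_natCast]
      rw [hco]
      exact hdsq.hasSum
    · intro m hm
      simp only [heG, dif_neg (hrange m hm), norm_zero]
      simp
  have hsumGle : ∑' m : ℤ, ‖eG m‖ ^ 2 ≤ ∑' n : ℕ, ‖a n‖ ^ 2 := by
    rw [hsumG]
    apply Summable.tsum_le_tsum _ hdsq ha1
    intro n
    apply pow_le_pow_left₀ (norm_nonneg _)
    calc ‖d n‖ = ‖a n‖ * r ^ n := by
          simp [hd, norm_mul, norm_pow, Complex.norm_real, Real.norm_eq_abs, abs_of_pos hr0]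
      _ ≤ ‖a n‖ * 1 := by
          apply mul_le_mul_of_nonneg_left _ (norm_nonneg _)
          exact pow_le_one₀ hr0.le hr1.le
      _ = ‖a n‖ := mul_one _
  -- identify w with the target coefficients
  have hwb : ∀ n, w n = (r:ℂ) ^ n * ∑ k ∈ Finset.range (n + 1), x k * a (n - k) := by
    intro n
    rw [hw, Finset.mul_sum]
    apply Finset.sum_congr rfl
    intro k hk
    rw [Finset.mem_range] at hk
    have hkn : k + (n - k) = n := Nat.add_sub_cancel' (Nat.lt_succ_iff.mp hk)
    have hp : (r:ℂ) ^ k * (r:ℂ) ^ (n - k) = (r:ℂ) ^ n := by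
      rw [← pow_add, hkn]
    simp only [hc, hd]
    rw [← hp]
    ring
  -- finite sum bound
  have hfin : ∑ n ∈ Finset.range N, ‖w n‖ ^ 2 ≤ ∑' m : ℤ, ‖e m‖ ^ 2 := by
    have h1 : ∑ n ∈ Finset.range N, ‖w n‖ ^ 2
        = ∑ m ∈ (Finset.range N).map ⟨((↑·) : ℕ → ℤ), (Nat.cast_injective : Function.Injective ((↑·) : ℕ → ℤ))⟩, ‖e m‖ ^ 2 := by
      rw [Finset.sum_map]
      apply Finset.sum_congr rfl
      intro n _
      simp [he, Int.toNat_natCast]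
    rw [h1]
    exact Summable.sum_le_tsum _ (fun m _ => by positivity) hSFG
  calc ∑ n ∈ Finset.range N, ‖((r:ℂ))^n * ∑ k ∈ Finset.range (n + 1), x k * a (n - k)‖ ^ 2
      = ∑ n ∈ Finset.range N, ‖w n‖ ^ 2 := by
        apply Finset.sum_congr rfl
        intro n _
        rw [hwb n]
    _ ≤ ∑' m : ℤ, ‖e m‖ ^ 2 := hfin
    _ = ∫ t, ‖(F * G) t‖ ^ 2 ∂haarAddCircle := hPFG
    _ ≤ M ^ 2 * ∫ t, ‖G t‖ ^ 2 ∂haarAddCircle := hint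
    _ = M ^ 2 * ∑' m : ℤ, ‖eG m‖ ^ 2 := by rw [hPG]
    _ ≤ M ^ 2 * ∑' n : ℕ, ‖a n‖ ^ 2 := by
        apply mul_le_mul_of_nonneg_left hsumGle (sq_nonneg M)

/-- If `f` is bounded holomorphic on the unit disk with Taylor
coefficients `(xₙ)` and `a ∈ ℓ²(ℕ, ℂ)`, then the Cauchy product
`b(n) = ∑_{k=0}^n xₖ a(n−k)` is square-summable with
`‖b‖₂ ≤ (sup_𝔻 |f|) · ‖a‖₂`; i.e. the transfer-function operator `f(L)` is a
well-defined bounded operator of norm at most `sup_𝔻 |f|`. -/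
theorem cauchy_product_with_Hinfty_coeffs_bounded
    (f : ℂ → ℂ) (x : ℕ → ℂ)
    (hf : DifferentiableOn ℂ f (ball (0 : ℂ) 1))
    (hfb : ∃ C : ℝ, ∀ z ∈ ball (0 : ℂ) 1, ‖f z‖ ≤ C)
    (hx : ∀ z ∈ ball (0 : ℂ) 1, HasSum (fun n : ℕ => x n * z ^ n) (f z))
    (a : lp (fun _ : ℕ => ℂ) 2) :
    Summable (fun n : ℕ => ‖∑ k ∈ Finset.range (n + 1), x k * a (n - k)‖ ^ 2) ∧
    Real.sqrt (∑' n : ℕ, ‖∑ k ∈ Finset.range (n + 1), x k * a (n - k)‖ ^ 2) ≤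
      (⨆ z ∈ ball (0 : ℂ) 1, ‖f z‖) * ‖a‖ := by
  classical
  obtain ⟨C, hC⟩ := hfb
  set M : ℝ := ⨆ z ∈ ball (0 : ℂ) 1, ‖f z‖ with hM
  set g : ℂ → ℝ := fun z => ⨆ _ : z ∈ ball (0:ℂ) 1, ‖f z‖ with hg
  have hgb : ∀ z, g z ≤ max C 0 := by
    intro z
    by_cases hz : z ∈ ball (0:ℂ) 1
    · rw [hg]
      simp only []
      rw [ciSup_pos hz]
      exact le_max_of_le_left (hC z hz)
    · rw [hg]
      simp only []
      haveI : IsEmpty (z ∈ ball (0:ℂ) 1) := ⟨hz⟩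
      rw [Real.iSup_of_isEmpty]
      exact le_max_right _ _
  have hbdd : BddAbove (Set.range g) := ⟨max C 0, by rintro y ⟨z, rfl⟩; exact hgb z⟩
  have hfM : ∀ z ∈ ball (0:ℂ) 1, ‖f z‖ ≤ M := by
    intro z hz
    have h1 : ‖f z‖ = g z := by rw [hg]; simp only []; rw [ciSup_pos hz]
    rw [h1, hM]
    exact le_ciSup hbdd z
  have hM0 : 0 ≤ M := le_trans (norm_nonneg (f 0)) (hfM 0 (mem_ball_self one_pos))
  have haA : ∀ n, ‖a n‖ ≤ ‖a‖ := fun n =>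
    lp.norm_apply_le_norm (by norm_num : (2:ℝ≥0∞) ≠ 0) a n
  have ha1 : Summable (fun n : ℕ => ‖a n‖ ^ 2) := by
    have h1 := (memℓp_gen_iff (p := 2) (by norm_num)).mp (lp.memℓp a)
    have h2 : (fun n : ℕ => ‖a n‖ ^ (2:ℝ≥0∞).toReal) = fun n : ℕ => ‖a n‖ ^ 2 := by
      funext n; norm_num
    rwa [h2] at h1
  have htsum : ∑' n : ℕ, ‖a n‖ ^ 2 = ‖a‖ ^ 2 := by
    have h1 := lp.norm_rpow_eq_tsum (p := 2) (by norm_num) a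
    have h2 : ((2:ℝ≥0∞)).toReal = ((2:ℕ):ℝ) := by norm_num
    rw [h2] at h1
    simp only [Real.rpow_natCast] at h1
    exact_mod_cast h1.symm
  set b : ℕ → ℂ := fun n => ∑ k ∈ Finset.range (n + 1), x k * a (n - k) with hb
  have hstep : ∀ r ∈ Set.Ioo (0:ℝ) 1, ∀ N : ℕ,
      ∑ n ∈ Finset.range N, ‖((r:ℂ))^n * b n‖ ^ 2 ≤ M ^ 2 * ‖a‖ ^ 2 := by
    intro r hr N
    have := step_r f x M hfM hx (fun n => a n) ‖a‖ haA ha1 r hr.1 hr.2 N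
    rwa [htsum] at this
  have hN : ∀ N : ℕ, ∑ n ∈ Finset.range N, ‖b n‖ ^ 2 ≤ M ^ 2 * ‖a‖ ^ 2 := by
    intro N
    have hne : (nhdsWithin (1:ℝ) (Set.Ioo 0 1)).NeBot := by
      apply mem_closure_iff_nhdsWithin_neBot.mp
      rw [closure_Ioo (by norm_num : (0:ℝ) ≠ 1)]
      exact Set.right_mem_Icc.mpr zero_le_one
    have hcont : Continuous (fun r : ℝ => ∑ n ∈ Finset.range N, ‖((r:ℂ))^n * b n‖ ^ 2) := by
      apply continuous_finset_sum
      intro n _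
      exact ((Complex.continuous_ofReal.pow n).mul continuous_const).norm.pow 2
    have htend : Filter.Tendsto (fun r : ℝ => ∑ n ∈ Finset.range N, ‖((r:ℂ))^n * b n‖ ^ 2)
        (nhdsWithin (1:ℝ) (Set.Ioo 0 1))
        (nhds (∑ n ∈ Finset.range N, ‖(((1:ℝ):ℂ))^n * b n‖ ^ 2)) :=
      (hcont.tendsto 1).mono_left nhdsWithin_le_nhds
    have hle := le_of_tendsto htend
      (Filter.eventually_iff_exists_mem.mpr ⟨Set.Ioo 0 1, self_mem_nhdsWithin,
        fun r hr => hstep r hr N⟩)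
    simpa using hle
  have hsummable : Summable (fun n : ℕ => ‖b n‖ ^ 2) :=
    summable_of_sum_range_le (fun n => by positivity) hN
  refine ⟨hsummable, ?_⟩
  have h1 : ∑' n : ℕ, ‖b n‖ ^ 2 ≤ M ^ 2 * ‖a‖ ^ 2 :=
    Summable.tsum_le_of_sum_range_le hsummable hN
  have h2 : M ^ 2 * ‖a‖ ^ 2 = (M * ‖a‖) ^ 2 := by ring
  calc Real.sqrt (∑' n : ℕ, ‖b n‖ ^ 2) ≤ Real.sqrt ((M * ‖a‖) ^ 2) := by
        apply Real.sqrt_le_sqrt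
        rw [← h2]
        exact h1
    _ = M * ‖a‖ := Real.sqrt_sq (by positivity)
end
end

section
/- For the transfer function x(z) = log(1 + z/2) (principal logarithm), the non-Padé rational approximation is a strictly better sup-norm approximation on the unit circle than the Padé (1,1) approximation: sup_{|z|=1} | log(1 + z/2) − (z/1.98)/(1 + z/3.96) | < sup_{|z|=1} | log(1 + z/2) − (z/2)/(1 + z/4) |. Consequently, by the spectral lemma, the ARMA(1,1) model with transfer function (z/1.98)/(1 + z/3.96) is a better L² approximation bound for the stationary process X_t = ∑_{n=0}^∞ (−1)ⁿ ε_{t−n}/(2ⁿ(n+1)) than the Padé-derived ARMA(1,1) model with transfer function (z/2)/(1 + z/4); Padé approximations do not always yield the best ARMA models. -/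
open Metric

noncomputable def aa (n : ℕ) : ℂ := (-1)^(n+1) / (n * 2^n)

noncomputable def bb : ℕ → ℂ
  | 0 => 0
  | n+1 => (1/1.98) * (-1/3.96)^n

lemma norm_two_c : ‖(2:ℂ)‖ = 2 := by
  rw [show (2:ℂ) = ((2:ℝ):ℂ) by norm_num, Complex.norm_real]; norm_num

lemma norm_four_c : ‖(4:ℂ)‖ = 4 := by
  rw [show (4:ℂ) = ((4:ℝ):ℂ) by norm_num, Complex.norm_real]; norm_num

lemma norm_396 : ‖(3.96:ℂ)‖ = 3.96 := by
  rw [show (3.96:ℂ) = ((3.96:ℝ):ℂ) by norm_num, Complex.norm_real]; norm_num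

lemma norm_198 : ‖(1.98:ℂ)‖ = 1.98 := by
  rw [show (1.98:ℂ) = ((1.98:ℝ):ℂ) by norm_num, Complex.norm_real]; norm_num

lemma hasSum_aa {z : ℂ} (hz : ‖z‖ < 2) :
    HasSum (fun n : ℕ => aa n * z^n) (Complex.log (1 + z/2)) := by
  have h2 : ‖z/2‖ < 1 := by rw [norm_div, norm_two_c]; linarith
  have h := Complex.hasSum_taylorSeries_log h2
  convert h using 2 with n
  unfold aa
  rw [div_pow]
  ring

lemma hasSum_bb {z : ℂ} (hz : ‖z‖ < 3) :
    HasSum (fun n : ℕ => bb n * z^n) ((z/1.98) / (1 + z/3.96)) := by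
  have h2 : ‖-z/3.96‖ < 1 := by
    rw [norm_div, norm_neg, norm_396, div_lt_one (by norm_num)]
    linarith
  have h := (hasSum_geometric_of_norm_lt_one h2).mul_left (z/1.98)
  have heq : z/1.98 * (1 - -z/3.96)⁻¹ = (z/1.98) / (1 + z/3.96) := by
    rw [show (1:ℂ) - -z/3.96 = 1 + z/3.96 by ring]
    exact (div_eq_mul_inv _ _).symm
  rw [heq] at h
  have h3 : HasSum (fun n : ℕ => bb (n+1) * z^(n+1)) ((z/1.98) / (1 + z/3.96)) := by
    convert h using 1
    · rfl
    funext n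
    show (1/1.98 : ℂ) * (-1/3.96)^n * z^(n+1) = z / 1.98 * (-z / 3.96) ^ n
    ring
  have h4 := (hasSum_nat_add_iff (f := fun n : ℕ => bb n * z^n) 1).mp h3
  simpa [bb] using h4

lemma coeff_zero (c : ℕ → ℂ)
    (h : ∀ z ∈ ball (0:ℂ) 1, HasSum (fun n : ℕ => c n * z^n) 0) : ∀ n, c n = 0 := by
  set p : FormalMultilinearSeries ℂ ℂ ℂ := FormalMultilinearSeries.ofScalars ℂ c with hp
  have hhalf : (1/2 : ℂ) ∈ ball (0:ℂ) 1 := by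
    simp [mem_ball, dist_eq_norm]
    norm_num
  have hs : Summable (fun n : ℕ => c n * (1/2:ℂ)^n) := (h _ hhalf).summable
  have ht : Filter.Tendsto (fun n : ℕ => ‖c n * (1/2:ℂ)^n‖) Filter.atTop (nhds 0) := by
    simpa using hs.tendsto_atTop_zero.norm
  obtain ⟨C, hC⟩ := ht.bddAbove_range
  have hnorm : ∀ n : ℕ, ‖c n‖ * ((1/2 : NNReal) : ℝ)^n ≤ C := by
    intro n
    have := hC (Set.mem_range_self n)
    rw [norm_mul, norm_pow] at this
    rw [show ‖(1/2:ℂ)‖ = ((1/2 : NNReal) : ℝ) by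
      rw [show (1/2:ℂ) = ((1/2:ℝ):ℂ) by norm_num, Complex.norm_real]; norm_num] at this
    exact this
  have hrad : (1/2 : ENNReal) ≤ p.radius := by
    have := p.le_radius_of_bound C (r := (1/2 : NNReal)) (fun n => by
      rw [hp, FormalMultilinearSeries.ofScalars_norm]; exact hnorm n)
    convert this using 2
    simp
  have hball : HasFPowerSeriesOnBall (fun _ : ℂ => (0:ℂ)) p 0 (1/2) := by
    refine ⟨hrad, by norm_num, ?_⟩
    intro y hy
    rw [EMetric.mem_ball, edist_zero_right] at hy
    have hy1 : y ∈ ball (0:ℂ) 1 := by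
      rw [mem_ball, dist_zero_right]
      have h0 : (‖y‖₊ : ENNReal) < 1/2 := hy
      rw [show (1/2 : ENNReal) = ((1/2 : NNReal) : ENNReal) by simp] at h0
      have h2 : (‖y‖₊ : NNReal) < 1/2 := ENNReal.coe_lt_coe.mp h0
      have h3 : ‖y‖ < 1/2 := by exact_mod_cast h2
      linarith
    have hfun : (fun n => p n fun _ => y) = fun n : ℕ => c n * y^n :=
      funext fun n => by rw [hp, FormalMultilinearSeries.ofScalars_apply_eq, smul_eq_mul]
    show HasSum (fun n => p n fun _ => y) _
    rw [hfun]
    exact h y hy1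
  have hz : p = 0 := HasFPowerSeriesAt.eq_zero ⟨1/2, hball⟩
  intro n
  have := (FormalMultilinearSeries.ofScalars_series_eq_zero ℂ).mp (hp ▸ hz)
  exact congrFun this n

lemma norm_aa (m : ℕ) : ‖aa m‖ = 1 / (m * 2^m) := by
  unfold aa
  rw [norm_div, norm_pow, norm_neg, norm_one, one_pow, norm_mul, norm_pow,
    Complex.norm_natCast, norm_two_c]

lemma norm_bb (n : ℕ) : ‖bb (n+1)‖ = (1/1.98) * (1/3.96)^n := by
  show ‖(1/1.98 : ℂ) * (-1/3.96)^n‖ = _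
  rw [norm_mul, norm_pow, norm_div, norm_div, norm_neg, norm_one, norm_396, norm_198]

lemma hd_tail (n : ℕ) : ‖aa (n+7) - bb (n+7)‖ ≤ (13/10000:ℝ) * (1/2)^n := by
  have hp : (0:ℝ) < 2^n := by positivity
  have hn : (0:ℝ) ≤ n := Nat.cast_nonneg n
  have h1 : ‖aa (n+7)‖ ≤ (1/896 : ℝ) * (1/2)^n := by
    rw [norm_aa]
    have hr : (1/896 : ℝ) * (1/2)^n = 1/(896 * 2^n) := by rw [one_div_pow]; ring
    rw [hr]
    apply one_div_le_one_div_of_le (by positivity)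
    push_cast
    rw [pow_add]
    nlinarith
  have h2 : ‖bb (n+7)‖ ≤ (15/100000 : ℝ) * (1/2)^n := by
    have heq : (n+7) = (n+6)+1 := by omega
    rw [heq, norm_bb, pow_add]
    have hle : ((1:ℝ)/3.96)^n ≤ (1/2)^n :=
      pow_le_pow_left₀ (by norm_num) (by norm_num) n
    calc (1/1.98 : ℝ) * ((1/3.96)^n * (1/3.96)^6)
        = ((1/1.98) * (1/3.96)^6) * (1/3.96)^n := by ring
      _ ≤ ((1/1.98) * (1/3.96)^6) * (1/2)^n := by
          apply mul_le_mul_of_nonneg_left hle (by norm_num)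
      _ ≤ (15/100000 : ℝ) * (1/2)^n := by
          apply mul_le_mul_of_nonneg_right (by norm_num) (by positivity)
  calc ‖aa (n+7) - bb (n+7)‖ ≤ ‖aa (n+7)‖ + ‖bb (n+7)‖ := norm_sub_le _ _
    _ ≤ (1/896 : ℝ) * (1/2)^n + (15/100000 : ℝ) * (1/2)^n := add_le_add h1 h2
    _ ≤ (13/10000:ℝ) * (1/2)^n := by
        have hq : (0:ℝ) ≤ (1/2)^n := by positivity
        nlinarith [hq]

lemma key (u v : ℝ) (huv : u^2 + v^2 = 1) :
    Complex.normSq (((-1/198:ℝ):ℂ) * ((u:ℂ) + (v:ℂ)*Complex.I)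
      + ((199/78408:ℝ):ℂ) * ((u:ℂ) + (v:ℂ)*Complex.I)^2
      + ((73433/7762392:ℝ):ℂ) * ((u:ℂ) + (v:ℂ)*Complex.I)^3
      + ((-46059601/6147814464:ℝ):ℂ) * ((u:ℂ) + (v:ℂ)*Complex.I)^4
      + ((6384900499/1521584079840:ℝ):ℂ) * ((u:ℂ) + (v:ℂ)*Complex.I)^5
      + ((-251326716467/120509459123328:ℝ):ℂ) * ((u:ℂ) + (v:ℂ)*Complex.I)^6)
    ≤ (11/500)^2 := by
  have hu1 : u ≤ 1 := by nlinarith [sq_nonneg (u-1), sq_nonneg v]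
  have hu2 : -1 ≤ u := by nlinarith [sq_nonneg (u+1), sq_nonneg v]
  have h2 : v^2 = 1 - u^2 := by linarith
  simp only [Complex.normSq_apply, Complex.add_re, Complex.add_im, Complex.mul_re,
    Complex.mul_im, Complex.I_re, Complex.I_im, Complex.ofReal_re, Complex.ofReal_im,
    pow_succ, pow_zero, one_mul, mul_zero, zero_mul, mul_one, sub_zero, zero_add,
    add_zero, zero_sub, mul_neg, neg_neg, neg_zero]
  ring_nf
  rw [show v^12 = (1-u^2)^6 by rw [← h2]; ring,
      show v^10 = (1-u^2)^5 by rw [← h2]; ring,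
      show v^8 = (1-u^2)^4 by rw [← h2]; ring,
      show v^6 = (1-u^2)^3 by rw [← h2]; ring,
      show v^4 = (1-u^2)^2 by rw [← h2]; ring, h2]
  ring_nf
  have hA : (0:ℝ) ≤ 47806145374844273/92274469442792010000
      + (-251326716467/745652278325592) * u := by linarith
  have hB : (0:ℝ) ≤ 5415394671996698420481565924111/10454014248055802174163169125270000
      + (-235709488788450421360901/699440612063614764517064088) * u := by linarith
  have hC : (0:ℝ) ≤ 53309795860610539952095916298458876873/4553768606453107427065476470967612000000000000
      + (9763363163241003999041101847989/1763173209577028885553432388500000000000) * u := by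
    linarith
  nlinarith [mul_nonneg hA (sq_nonneg (u^2 + (1399/10000)*u + (-5569/10000))),
             mul_nonneg hB (sq_nonneg ((-9783/10000)*u + (-5449/10000))), hC]

lemma E2_bound {z : ℂ} (hz : ‖z‖ = 1) :
    ‖Complex.log (1 + z/2) - (z/1.98)/(1 + z/3.96)‖ ≤ 123/5000 := by
  set S := Complex.log (1 + z/2) - (z/1.98)/(1 + z/3.96) with hS
  have hs : HasSum (fun n : ℕ => (aa n - bb n) * z^n) S := by
    have := (hasSum_aa (by rw [hz]; norm_num)).sub (hasSum_bb (by rw [hz]; norm_num))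
    convert this using 1
    · rfl
    funext n; ring
  set P := ∑ i ∈ Finset.range 7, (aa i - bb i) * z^i with hP
  have h7 : HasSum (fun n : ℕ => (aa (n+7) - bb (n+7)) * z^(n+7)) (S - P) := by
    apply (hasSum_nat_add_iff (f := fun n : ℕ => (aa n - bb n) * z^n) 7).mpr
    rwa [sub_add_cancel]
  have hfb : ∀ n : ℕ, ‖(aa (n+7) - bb (n+7)) * z^(n+7)‖ ≤ (13/10000:ℝ) * (1/2)^n := by
    intro n
    rw [norm_mul, norm_pow, hz, one_pow, mul_one]
    exact hd_tail n
  have hgs : Summable (fun n : ℕ => (13/10000:ℝ) * (1/2)^n) :=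
    (summable_geometric_of_lt_one (by norm_num) (by norm_num)).mul_left _
  have hns : Summable (fun n : ℕ => ‖(aa (n+7) - bb (n+7)) * z^(n+7)‖) :=
    Summable.of_nonneg_of_le (fun n => norm_nonneg _) hfb hgs
  have htail : ‖S - P‖ ≤ 13/5000 := by
    calc ‖S - P‖ = ‖∑' n : ℕ, (aa (n+7) - bb (n+7)) * z^(n+7)‖ := by rw [h7.tsum_eq]
      _ ≤ ∑' n : ℕ, ‖(aa (n+7) - bb (n+7)) * z^(n+7)‖ := norm_tsum_le_tsum_norm hns
      _ ≤ ∑' n : ℕ, (13/10000:ℝ) * (1/2)^n := Summable.tsum_le_tsum hfb hns hgs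
      _ = 13/5000 := by
          rw [tsum_mul_left, tsum_geometric_of_lt_one (by norm_num) (by norm_num)]
          norm_num
  have hPval : P = ((-1/198:ℝ):ℂ) * z + ((199/78408:ℝ):ℂ) * z^2
      + ((73433/7762392:ℝ):ℂ) * z^3 + ((-46059601/6147814464:ℝ):ℂ) * z^4
      + ((6384900499/1521584079840:ℝ):ℂ) * z^5
      + ((-251326716467/120509459123328:ℝ):ℂ) * z^6 := by
    rw [hP]
    rw [Finset.sum_range_succ, Finset.sum_range_succ, Finset.sum_range_succ,
      Finset.sum_range_succ, Finset.sum_range_succ, Finset.sum_range_succ,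
      Finset.sum_range_one]
    norm_num [aa, bb]
  have huv : z.re^2 + z.im^2 = 1 := by
    have h1 : ‖z‖ = 1 := by rw [hz]
    have h2 : Complex.normSq z = 1 := by rw [← Complex.sq_norm, h1]; norm_num
    rw [Complex.normSq_apply] at h2
    nlinarith [h2]
  have hzri : (↑z.re + ↑z.im * Complex.I) = z := Complex.re_add_im z
  have hPn : ‖P‖ ≤ 11/500 := by
    have hk := key z.re z.im huv
    rw [hzri] at hk
    rw [← hPval] at hk
    have hsq : ‖P‖^2 = Complex.normSq P := by
      rw [Complex.sq_norm]
    nlinarith [norm_nonneg P, hsq, hk]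
  calc ‖S‖ = ‖P + (S - P)‖ := by ring_nf
    _ ≤ ‖P‖ + ‖S - P‖ := norm_add_le _ _
    _ ≤ 11/500 + 13/5000 := add_le_add hPn htail
    _ = 123/5000 := by norm_num

lemma E1_upper {z : ℂ} (hz : ‖z‖ = 1) :
    ‖Complex.log (1 + z/2) - (z/2)/(1 + z/4)‖ ≤ 2 := by
  have hz2 : ‖z/2‖ = 1/2 := by rw [norm_div, norm_two_c, hz]
  have hlog : ‖Complex.log (1+z/2)‖ ≤ 3/2 * ‖z/2‖ :=
    Complex.norm_log_one_add_half_le_self (by rw [hz2])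
  have hden : (3/4:ℝ) ≤ ‖1+z/4‖ := by
    have h := norm_sub_norm_le (1:ℂ) (-(z/4))
    rw [sub_neg_eq_add, norm_neg, norm_one, norm_div, norm_four_c, hz] at h
    linarith
  have hfrac : ‖(z/2)/(1+z/4)‖ ≤ 2/3 := by
    rw [norm_div, hz2, div_le_iff₀ (by linarith)]
    linarith
  calc ‖Complex.log (1 + z/2) - (z/2)/(1 + z/4)‖
      ≤ ‖Complex.log (1+z/2)‖ + ‖(z/2)/(1+z/4)‖ := norm_sub_le _ _
    _ ≤ 3/2 * (1/2) + 2/3 := by rw [hz2] at hlog; exact add_le_add hlog hfrac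
    _ ≤ 2 := by norm_num

lemma E2_neg_one :
    ‖Complex.log (1 + (-1:ℂ)/2) - ((-1:ℂ)/1.98)/(1 + (-1:ℂ)/3.96)‖
      = Real.log 2 - 25/37 := by
  have h1 : (1 + (-1:ℂ)/2) = (((1/2:ℝ)):ℂ) := by norm_num
  have h2 : ((-1:ℂ)/1.98)/(1 + (-1:ℂ)/3.96) = (((-25/37:ℝ)):ℂ) := by norm_num
  rw [h1, h2, ← Complex.ofReal_log (by norm_num : (0:ℝ) ≤ 1/2), ← Complex.ofReal_sub,
    Complex.norm_real]
  have hhalf : Real.log (1/2) = - Real.log 2 := by rw [one_div, Real.log_inv]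
  rw [hhalf]
  have hl := Real.log_two_gt_d9
  rw [Real.norm_eq_abs, abs_of_nonpos (by norm_num; linarith)]
  ring

lemma E1_neg_one :
    ‖Complex.log (1 + (-1:ℂ)/2) - ((-1:ℂ)/2)/(1 + (-1:ℂ)/4)‖
      = Real.log 2 - 2/3 := by
  have h1 : (1 + (-1:ℂ)/2) = (((1/2:ℝ)):ℂ) := by norm_num
  have h2 : ((-1:ℂ)/2)/(1 + (-1:ℂ)/4) = (((-2/3:ℝ)):ℂ) := by norm_num
  rw [h1, h2, ← Complex.ofReal_log (by norm_num : (0:ℝ) ≤ 1/2), ← Complex.ofReal_sub,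
    Complex.norm_real]
  have hhalf : Real.log (1/2) = - Real.log 2 := by rw [one_div, Real.log_inv]
  rw [hhalf]
  have hl := Real.log_two_gt_d9
  rw [Real.norm_eq_abs, abs_of_nonpos (by norm_num; linarith)]
  ring

/-- For the transfer function `log(1 + z/2)`, the non-Padé rational
approximant `(z/1.98)/(1 + z/3.96)` is a strictly better sup-norm approximation on the
unit circle than the Padé (1,1) approximant `(z/2)/(1 + z/4)`; consequently (via the
spectral lemma) the non-Padé ARMA(1,1) model gives a better L² approximation bound for
the associated stationary process than the Padé-derived one: Padé approximations do not
always yield the best ARMA models. -/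
theorem non_pade_beats_pade_for_log_transfer_function
    (x y₁ y₂ : ℕ → ℂ)
    (hx : ∀ z ∈ ball (0 : ℂ) 1,
      HasSum (fun n : ℕ => x n * z ^ n) (Complex.log (1 + z / 2)))
    (hy₁ : ∀ z ∈ ball (0 : ℂ) 1,
      HasSum (fun n : ℕ => y₁ n * z ^ n) ((z / 2) / (1 + z / 4)))
    (hy₂ : ∀ z ∈ ball (0 : ℂ) 1,
      HasSum (fun n : ℕ => y₂ n * z ^ n) ((z / 1.98) / (1 + z / 3.96))) :
    (⨆ z : sphere (0 : ℂ) 1,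
        ‖Complex.log (1 + (z : ℂ) / 2) - ((z : ℂ) / 1.98) / (1 + (z : ℂ) / 3.96)‖) <
      (⨆ z : sphere (0 : ℂ) 1,
        ‖Complex.log (1 + (z : ℂ) / 2) - ((z : ℂ) / 2) / (1 + (z : ℂ) / 4)‖) ∧
    Real.sqrt (∑' n : ℕ, ‖x n - y₂ n‖ ^ 2) ≤
      ⨆ z : sphere (0 : ℂ) 1,
        ‖Complex.log (1 + (z : ℂ) / 2) - ((z : ℂ) / 1.98) / (1 + (z : ℂ) / 3.96)‖ := by
  have hl := Real.log_two_gt_d9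
  have hsphere : ∀ w : sphere (0:ℂ) 1, ‖(w:ℂ)‖ = 1 := fun w => by
    have := w.2
    rwa [mem_sphere_iff_norm, sub_zero] at this
  have hne : Nonempty (sphere (0:ℂ) 1) := ⟨⟨1, by simp⟩⟩
  let m1 : sphere (0:ℂ) 1 := ⟨-1, by simp⟩
  -- bounds for the two families
  have hub2 : ∀ w : sphere (0:ℂ) 1,
      ‖Complex.log (1 + (w:ℂ)/2) - ((w:ℂ)/1.98)/(1 + (w:ℂ)/3.96)‖ ≤ 123/5000 :=
    fun w => E2_bound (hsphere w)
  have hbdd2 : BddAbove (Set.range fun w : sphere (0:ℂ) 1 =>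
      ‖Complex.log (1 + (w:ℂ)/2) - ((w:ℂ)/1.98)/(1 + (w:ℂ)/3.96)‖) := by
    refine ⟨123/5000, ?_⟩
    rintro _ ⟨w, rfl⟩
    exact hub2 w
  have hbdd1 : BddAbove (Set.range fun w : sphere (0:ℂ) 1 =>
      ‖Complex.log (1 + (w:ℂ)/2) - ((w:ℂ)/2)/(1 + (w:ℂ)/4)‖) := by
    refine ⟨2, ?_⟩
    rintro _ ⟨w, rfl⟩
    exact E1_upper (hsphere w)
  constructor
  · have hle : (⨆ w : sphere (0:ℂ) 1,
        ‖Complex.log (1 + (w:ℂ)/2) - ((w:ℂ)/1.98)/(1 + (w:ℂ)/3.96)‖) ≤ 123/5000 :=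
      ciSup_le hub2
    have hge : (Real.log 2 - 2/3 : ℝ) ≤ ⨆ w : sphere (0:ℂ) 1,
        ‖Complex.log (1 + (w:ℂ)/2) - ((w:ℂ)/2)/(1 + (w:ℂ)/4)‖ := by
      have h := le_ciSup hbdd1 m1
      rw [show ((m1:ℂ)) = (-1:ℂ) from rfl] at h
      rwa [E1_neg_one] at h
    have : (123/5000 : ℝ) < Real.log 2 - 2/3 := by linarith
    linarith
  · -- identify coefficients
    have hxa : ∀ n, x n = aa n := by
      intro n
      have h := coeff_zero (fun n => x n - aa n) (fun z hz => by
        have hz1 : ‖z‖ < 1 := by rwa [mem_ball, dist_zero_right] at hz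
        have := (hx z hz).sub (hasSum_aa (by linarith))
        rw [sub_self] at this
        convert this using 1
        · rfl
        funext n; ring)
      have := h n
      simpa [sub_eq_zero] using this
    have hyb : ∀ n, y₂ n = bb n := by
      intro n
      have h := coeff_zero (fun n => y₂ n - bb n) (fun z hz => by
        have hz1 : ‖z‖ < 1 := by rwa [mem_ball, dist_zero_right] at hz
        have := (hy₂ z hz).sub (hasSum_bb (by linarith))
        rw [sub_self] at this
        convert this using 1
        · rfl
        funext n; ring)
      have := h n
      simpa [sub_eq_zero] using this
    have htsum_eq : (∑' n : ℕ, ‖x n - y₂ n‖^2) = ∑' n : ℕ, ‖aa n - bb n‖^2 := by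
      congr 1
      funext n
      rw [hxa n, hyb n]
    -- tail bounds for squares
    have hd2 : ∀ n : ℕ, ‖aa (n+7) - bb (n+7)‖^2 ≤ (169/100000000:ℝ) * (1/4)^n := by
      intro n
      have h := hd_tail n
      have hnn := norm_nonneg (aa (n+7) - bb (n+7))
      have h4 : ((1/2:ℝ)^n)^2 = (1/4)^n := by
        rw [sq, ← mul_pow]; norm_num
      nlinarith [h, hnn, sq_nonneg ((1/2:ℝ)^n)]
    have hgs4 : Summable (fun n : ℕ => (169/100000000:ℝ) * (1/4)^n) :=
      (summable_geometric_of_lt_one (by norm_num) (by norm_num)).mul_left _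
    have hs7 : Summable (fun n : ℕ => ‖aa (n+7) - bb (n+7)‖^2) :=
      Summable.of_nonneg_of_le (fun n => sq_nonneg _) hd2 hgs4
    have hsf : Summable (fun n : ℕ => ‖aa n - bb n‖^2) :=
      (summable_nat_add_iff 7).mp hs7
    have hsplit := (Summable.sum_add_tsum_nat_add 7 hsf).symm
    have htail2 : (∑' n : ℕ, ‖aa (n+7) - bb (n+7)‖^2) ≤ 169/75000000 := by
      calc (∑' n : ℕ, ‖aa (n+7) - bb (n+7)‖^2)
          ≤ ∑' n : ℕ, (169/100000000:ℝ) * (1/4)^n := Summable.tsum_le_tsum hd2 hs7 hgs4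
        _ = (169/100000000:ℝ) * (4/3) := by
            rw [tsum_mul_left, tsum_geometric_of_lt_one (by norm_num) (by norm_num)]
            norm_num
        _ ≤ 169/75000000 := by norm_num
    have hfin : (∑ i ∈ Finset.range 7, ‖aa i - bb i‖^2)
        = (1/198:ℝ)^2 + (199/78408:ℝ)^2 + (73433/7762392:ℝ)^2
          + (46059601/6147814464:ℝ)^2 + (6384900499/1521584079840:ℝ)^2
          + (251326716467/120509459123328:ℝ)^2 := by
      rw [Finset.sum_range_succ, Finset.sum_range_succ, Finset.sum_range_succ,
        Finset.sum_range_succ, Finset.sum_range_succ, Finset.sum_range_succ,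
        Finset.sum_range_one]
      rw [show aa 0 - bb 0 = 0 from by norm_num [aa, bb],
        show aa 1 - bb 1 = ((-1/198:ℝ):ℂ) from by norm_num [aa, bb],
        show aa 2 - bb 2 = ((199/78408:ℝ):ℂ) from by norm_num [aa, bb],
        show aa 3 - bb 3 = ((73433/7762392:ℝ):ℂ) from by norm_num [aa, bb],
        show aa 4 - bb 4 = ((-46059601/6147814464:ℝ):ℂ) from by norm_num [aa, bb],
        show aa 5 - bb 5 = ((6384900499/1521584079840:ℝ):ℂ) from by norm_num [aa, bb],
        show aa 6 - bb 6 = ((-251326716467/120509459123328:ℝ):ℂ) from by norm_num [aa, bb]]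
      simp only [norm_zero, Complex.norm_real, Real.norm_eq_abs, sq_abs]
      norm_num
    have hbound : (∑' n : ℕ, ‖aa n - bb n‖^2) ≤ (Real.log 2 - 25/37)^2 := by
      rw [hsplit, hfin]
      have hnum : (1/198:ℝ)^2 + (199/78408:ℝ)^2 + (73433/7762392:ℝ)^2
          + (46059601/6147814464:ℝ)^2 + (6384900499/1521584079840:ℝ)^2
          + (251326716467/120509459123328:ℝ)^2 + 169/75000000 ≤ (1747/100000:ℝ)^2 := by
        norm_num
      have hlog : (1747/100000:ℝ) ≤ Real.log 2 - 25/37 := by linarith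
      nlinarith [htail2, hnum, hlog]
    have hval : ‖Complex.log (1 + ((m1:ℂ))/2) - ((m1:ℂ)/1.98)/(1 + (m1:ℂ)/3.96)‖
        = Real.log 2 - 25/37 := by
      rw [show ((m1:ℂ)) = (-1:ℂ) from rfl]
      exact E2_neg_one
    have hstep : Real.sqrt (∑' n : ℕ, ‖x n - y₂ n‖^2) ≤ Real.log 2 - 25/37 := by
      rw [htsum_eq]
      have ht0 : (0:ℝ) ≤ Real.log 2 - 25/37 := by linarith
      calc Real.sqrt (∑' n : ℕ, ‖aa n - bb n‖^2)
          ≤ Real.sqrt ((Real.log 2 - 25/37)^2) := Real.sqrt_le_sqrt hbound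
        _ = Real.log 2 - 25/37 := Real.sqrt_sq ht0
    have hfinal := le_ciSup hbdd2 m1
    rw [hval] at hfinal
    linarith
end
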